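/- Let 1 ≤ p ≤ 2, let H be a real Hilbert space, and let α > 0. Suppose T : L_p(0,1) → H is large-scale Lipschitz, i.e. there exist A > 0 and B ≥ 0 with ‖T(f) − T(g)‖_H ≤ A·‖f − g‖_p + B for all f, g ∈ L_p(0,1), and suppose there exist constants C, t > 0 such that ‖T(f) − T(g)‖_H ≥ C·‖f − g‖_p^α whenever ‖f − g‖_p ≥ t. Then α ≤ p/2. In particular, the Hilbert space compression exponent of L_p(0,1) is at most p/2. -/

import Mathlib

open MeasureTheory


variable {H : Type*} [NormedAddCommGroup H] [InnerProductSpace ℝ H]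

lemma quad_ineq (a b c d : H) :
    ‖a - c‖ ^ 2 + ‖b - d‖ ^ 2 ≤ ‖a - b‖ ^ 2 + ‖b - c‖ ^ 2 + ‖c - d‖ ^ 2 + ‖d - a‖ ^ 2 := by
  have key : ‖a - b‖ ^ 2 + ‖b - c‖ ^ 2 + ‖c - d‖ ^ 2 + ‖d - a‖ ^ 2
      - ‖a - c‖ ^ 2 - ‖b - d‖ ^ 2 = ‖a - b + c - d‖ ^ 2 := by
    simp only [@norm_sub_sq_real H, @norm_add_sq_real H, inner_sub_sub_self]
    simp [inner_sub_left, inner_sub_right, inner_add_left, inner_add_right,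
      real_inner_comm a b, real_inner_comm a c, real_inner_comm a d,
      real_inner_comm b c, real_inner_comm b d, real_inner_comm c d]
    ring
  nlinarith [sq_nonneg ‖a - b + c - d‖]

/-- Enflo's short diagonals inequality for the Hamming cube in Hilbert space. -/
lemma enflo_ineq : ∀ (n : ℕ) (f : (Fin n → Bool) → H),
    ∑ x : Fin n → Bool, ‖f x - f (fun i => !(x i))‖ ^ 2 ≤
      ∑ x : Fin n → Bool, ∑ i : Fin n,
        ‖f x - f (Function.update x i (!(x i)))‖ ^ 2 := by
  intro n
  induction n with
  | zero =>
    intro f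
    have h0 : ∀ x : Fin 0 → Bool, (fun i => !(x i)) = x := fun x => funext (fun i => i.elim0)
    simp [h0]
  | succ n ih =>
    intro f
    -- reindex cube (Fin (n+1) → Bool) as Bool × (Fin n → Bool) via Fin.cons
    have hsum : ∀ (F : (Fin (n+1) → Bool) → ℝ),
        ∑ y : Fin (n+1) → Bool, F y = ∑ b : Bool, ∑ x : Fin n → Bool, F (Fin.cons b x) := by
      intro F
      rw [← Finset.sum_product']
      exact (Fintype.sum_bijective (fun p : Bool × (Fin n → Bool) => (Fin.cons p.1 p.2 : Fin (n+1) → Bool))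
        (Fin.consEquiv (fun _ => Bool)).bijective _ _ (fun p => rfl)).symm
    have hneg : ∀ (b : Bool) (x : Fin n → Bool),
        (fun i => !((Fin.cons b x : Fin (n+1) → Bool) i)) = Fin.cons (!b) (fun i => !(x i)) := by
      intro b x
      funext i
      refine Fin.cases ?_ ?_ i <;> simp
    -- LHS rewritten
    rw [hsum, hsum]
    have hLHS : ∑ b : Bool, ∑ x : Fin n → Bool,
        ‖f (Fin.cons b x) - f (fun i => !((Fin.cons b x : Fin (n+1) → Bool) i))‖ ^ 2
        = ∑ x : Fin n → Bool,
          (‖f (Fin.cons false x) - f (Fin.cons true (fun i => !(x i)))‖ ^ 2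
          + ‖f (Fin.cons true x) - f (Fin.cons false (fun i => !(x i)))‖ ^ 2) := by
      simp only [hneg]
      rw [Fintype.sum_bool, ← Finset.sum_add_distrib]
      congr 1
      funext x
      simp [add_comm]
    rw [hLHS]
    -- RHS split: coordinate 0 and the rest
    have hRHS : ∑ b : Bool, ∑ x : Fin n → Bool, ∑ i : Fin (n+1),
        ‖f (Fin.cons b x) - f (Function.update (Fin.cons b x : Fin (n+1) → Bool) i (!((Fin.cons b x : Fin (n+1) → Bool) i)))‖ ^ 2
        = (∑ b : Bool, ∑ x : Fin n → Bool,
            ‖f (Fin.cons b x) - f (Fin.cons (!b) x)‖ ^ 2)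
        + ∑ b : Bool, ∑ x : Fin n → Bool, ∑ i : Fin n,
            ‖f (Fin.cons b x) - f (Fin.cons b (Function.update x i (!(x i))))‖ ^ 2 := by
      rw [← Finset.sum_add_distrib]
      congr 1; funext b
      rw [← Finset.sum_add_distrib]
      congr 1; funext x
      rw [Fin.sum_univ_succ]
      congr 1
      · rw [Fin.update_cons_zero]; simp
      · congr 1; funext i
        rw [Fin.cons_succ, ← Fin.cons_update]
    rw [hRHS]
    -- the vertical-edge sums for the two values of b are equal
    have hvert : ∑ b : Bool, ∑ x : Fin n → Bool,
        ‖f (Fin.cons b x) - f (Fin.cons (!b) x)‖ ^ 2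
        = 2 * ∑ x : Fin n → Bool, ‖f (Fin.cons false x) - f (Fin.cons true x)‖ ^ 2 := by
      rw [Fintype.sum_bool]
      have : ∀ x : Fin n → Bool, ‖f (Fin.cons true x) - f (Fin.cons false x)‖ ^ 2
          = ‖f (Fin.cons false x) - f (Fin.cons true x)‖ ^ 2 := by
        intro x; rw [norm_sub_rev]
      simp only [Bool.not_true, Bool.not_false, this]
      ring
    rw [hvert]
    -- apply induction hypothesis to both subcubes
    have hih : ∀ b : Bool, ∑ x : Fin n → Bool,
        ‖f (Fin.cons b x) - f (Fin.cons b (fun i => !(x i)))‖ ^ 2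
        ≤ ∑ x : Fin n → Bool, ∑ i : Fin n,
          ‖f (Fin.cons b x) - f (Fin.cons b (Function.update x i (!(x i))))‖ ^ 2 :=
      fun b => ih (fun x => f (Fin.cons b x))
    -- quadrilateral inequality for each x, summed
    have hquad : ∑ x : Fin n → Bool,
        (‖f (Fin.cons false x) - f (Fin.cons true (fun i => !(x i)))‖ ^ 2
        + ‖f (Fin.cons true x) - f (Fin.cons false (fun i => !(x i)))‖ ^ 2)
        ≤ (∑ b : Bool, ∑ x : Fin n → Bool,
            ‖f (Fin.cons b x) - f (Fin.cons b (fun i => !(x i)))‖ ^ 2)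
          + 2 * ∑ x : Fin n → Bool, ‖f (Fin.cons false x) - f (Fin.cons true x)‖ ^ 2 := by
      have hre : ∑ x : Fin n → Bool, ‖f (Fin.cons false (fun i => !(x i))) - f (Fin.cons true (fun i => !(x i)))‖ ^ 2
          = ∑ x : Fin n → Bool, ‖f (Fin.cons false x) - f (Fin.cons true x)‖ ^ 2 := by
        apply Fintype.sum_bijective (fun x : Fin n → Bool => fun i => !(x i))
        · exact Function.Involutive.bijective (fun x => by funext i; simp)
        · intro x; rfl
      calc ∑ x : Fin n → Bool,
          (‖f (Fin.cons false x) - f (Fin.cons true (fun i => !(x i)))‖ ^ 2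
          + ‖f (Fin.cons true x) - f (Fin.cons false (fun i => !(x i)))‖ ^ 2)
          ≤ ∑ x : Fin n → Bool,
            (‖f (Fin.cons false x) - f (Fin.cons false (fun i => !(x i)))‖ ^ 2
            + ‖f (Fin.cons false (fun i => !(x i))) - f (Fin.cons true (fun i => !(x i)))‖ ^ 2
            + ‖f (Fin.cons true (fun i => !(x i))) - f (Fin.cons true x)‖ ^ 2
            + ‖f (Fin.cons true x) - f (Fin.cons false x)‖ ^ 2) := by
            apply Finset.sum_le_sum
            intro x _
            have := quad_ineq (f (Fin.cons false x)) (f (Fin.cons false (fun i => !(x i))))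
              (f (Fin.cons true (fun i => !(x i)))) (f (Fin.cons true x))
            have h2 : ‖f (Fin.cons false (fun i => !(x i))) - f (Fin.cons true x)‖ ^ 2
                = ‖f (Fin.cons true x) - f (Fin.cons false (fun i => !(x i)))‖ ^ 2 := by
              rw [norm_sub_rev]
            linarith
        _ = (∑ b : Bool, ∑ x : Fin n → Bool,
              ‖f (Fin.cons b x) - f (Fin.cons b (fun i => !(x i)))‖ ^ 2)
            + 2 * ∑ x : Fin n → Bool, ‖f (Fin.cons false x) - f (Fin.cons true x)‖ ^ 2 := by
            rw [Fintype.sum_bool]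
            rw [Finset.sum_add_distrib, Finset.sum_add_distrib, Finset.sum_add_distrib]
            have h1 : ∑ x : Fin n → Bool, ‖f (Fin.cons true (fun i => !(x i))) - f (Fin.cons true x)‖ ^ 2
                = ∑ x : Fin n → Bool, ‖f (Fin.cons true x) - f (Fin.cons true (fun i => !(x i)))‖ ^ 2 := by
              apply Finset.sum_congr rfl; intro x _; rw [norm_sub_rev]
            have h2 : ∑ x : Fin n → Bool, ‖f (Fin.cons true x) - f (Fin.cons false x)‖ ^ 2
                = ∑ x : Fin n → Bool, ‖f (Fin.cons false x) - f (Fin.cons true x)‖ ^ 2 := by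
              apply Finset.sum_congr rfl; intro x _; rw [norm_sub_rev]
            rw [h1, h2, hre]; ring
    calc _ ≤ _ := hquad
      _ ≤ _ := by
          rw [Fintype.sum_bool, Fintype.sum_bool]
          have := hih true
          have := hih false
          linarith

/-- Norm of the difference of two same-constant indicator Lp functions equals
the indicator of the symmetric difference. -/
lemma norm_indicatorConstLp_sub_indicatorConstLp
    {X : Type*} [MeasurableSpace X] {μ : Measure X} {pe : ENNReal}
    {U V : Set X} (hU : MeasurableSet U) (hV : MeasurableSet V)
    (hμU : μ U ≠ ⊤) (hμV : μ V ≠ ⊤) (s : ℝ) :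
    ‖indicatorConstLp pe hU hμU s - indicatorConstLp pe hV hμV s‖
      = ‖indicatorConstLp pe ((hU.diff hV).union (hV.diff hU))
          (by
            refine lt_top_iff_ne_top.mp ?_
            calc μ ((U \ V) ∪ (V \ U)) ≤ μ (U \ V) + μ (V \ U) := measure_union_le _ _
              _ ≤ μ U + μ V := by
                  gcongr <;> [exact Set.diff_subset; exact Set.diff_subset]
              _ < ⊤ := by
                  exact ENNReal.add_lt_top.mpr ⟨lt_top_iff_ne_top.mpr hμU, lt_top_iff_ne_top.mpr hμV⟩) s‖ := by
  rw [Lp.norm_def, Lp.norm_def]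
  congr 1
  have h1 : ⇑(indicatorConstLp pe hU hμU s - indicatorConstLp pe hV hμV s)
      =ᵐ[μ] fun x => U.indicator (fun _ => s) x - V.indicator (fun _ => s) x := by
    filter_upwards [Lp.coeFn_sub (indicatorConstLp pe hU hμU s) (indicatorConstLp pe hV hμV s),
      indicatorConstLp_coeFn (p := pe) (hs := hU) (hμs := hμU) (c := s),
      indicatorConstLp_coeFn (p := pe) (hs := hV) (hμs := hμV) (c := s)] with x hx hxU hxV
    rw [hx, Pi.sub_apply, hxU, hxV]
  rw [eLpNorm_congr_ae h1,
    eLpNorm_congr_ae (indicatorConstLp_coeFn (p := pe) (c := s))]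
  apply eLpNorm_congr_norm_ae
  filter_upwards with x
  by_cases hxU : x ∈ U <;> by_cases hxV : x ∈ V <;>
    simp [Set.indicator, hxU, hxV]

noncomputable def cubeSet (n : ℕ) (i : Fin n) : Set ℝ :=
  Set.Ioo ((i.1 : ℝ) / n) (((i.1 : ℝ) + 1) / n)

lemma cubeSet_subset {n : ℕ} (i : Fin n) : cubeSet n i ⊆ Set.Ioo (0 : ℝ) 1 := by
  have hn : (0:ℝ) < n := by exact_mod_cast i.pos
  intro y hy
  obtain ⟨h1, h2⟩ := hy
  constructor
  · have : (0:ℝ) ≤ (i.1 : ℝ) / n := by positivity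
    linarith
  · have hi : (i.1 : ℝ) + 1 ≤ n := by exact_mod_cast i.isLt
    have : ((i.1:ℝ) + 1) / n ≤ 1 := by
      rw [div_le_one hn]; exact hi
    linarith

lemma measurableSet_cubeSet {n : ℕ} (i : Fin n) : MeasurableSet (cubeSet n i) :=
  measurableSet_Ioo

lemma cubeSet_uniq {n : ℕ} {i j : Fin n} {y : ℝ}
    (hi : y ∈ cubeSet n i) (hj : y ∈ cubeSet n j) : i = j := by
  have hn : (0:ℝ) < n := by exact_mod_cast i.pos
  by_contra hij
  obtain ⟨hi1, hi2⟩ := hi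
  obtain ⟨hj1, hj2⟩ := hj
  rcases lt_trichotomy i.1 j.1 with h | h | h
  · have hle : ((i.1:ℝ) + 1) ≤ (j.1:ℝ) := by exact_mod_cast h
    have : ((i.1:ℝ) + 1)/n ≤ (j.1:ℝ)/n := by gcongr
    linarith
  · exact hij (Fin.ext h)
  · have hle : ((j.1:ℝ) + 1) ≤ (i.1:ℝ) := by exact_mod_cast h
    have : ((j.1:ℝ) + 1)/n ≤ (i.1:ℝ)/n := by gcongr
    linarith

lemma volume_cubeSet {n : ℕ} (i : Fin n) :
    (volume.restrict (Set.Ioo (0:ℝ) 1)) (cubeSet n i) = ENNReal.ofReal (1 / n) := by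
  have hn : (0:ℝ) < n := by exact_mod_cast i.pos
  rw [Measure.restrict_apply (measurableSet_cubeSet i),
    Set.inter_eq_self_of_subset_left (cubeSet_subset i)]
  unfold cubeSet
  rw [Real.volume_Ioo]
  congr 1
  field_simp
  ring

noncomputable def cubeUnion (n : ℕ) (x : Fin n → Bool) : Set ℝ :=
  ⋃ i, (if x i then cubeSet n i else ∅)

lemma mem_cubeUnion {n : ℕ} {x : Fin n → Bool} {y : ℝ} :
    y ∈ cubeUnion n x ↔ ∃ i, x i = true ∧ y ∈ cubeSet n i := by
  unfold cubeUnion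
  simp only [Set.mem_iUnion]
  constructor
  · rintro ⟨i, hi⟩
    by_cases h : x i = true
    · exact ⟨i, h, by simpa [h] using hi⟩
    · simp [h] at hi
  · rintro ⟨i, h, hy⟩
    exact ⟨i, by simp [h, hy]⟩

lemma measurableSet_cubeUnion {n : ℕ} (x : Fin n → Bool) :
    MeasurableSet (cubeUnion n x) := by
  apply MeasurableSet.iUnion
  intro i
  by_cases h : x i = true
  · simpa [h] using measurableSet_cubeSet i
  · simp [h]

lemma cubeUnion_ne_top {n : ℕ} (x : Fin n → Bool) :
    (volume.restrict (Set.Ioo (0:ℝ) 1)) (cubeUnion n x) ≠ ⊤ :=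
  measure_ne_top _ _

lemma cubeUnion_symmdiff_edge {n : ℕ} (x : Fin n → Bool) (j : Fin n) :
    (cubeUnion n x \ cubeUnion n (Function.update x j (!(x j)))) ∪
      (cubeUnion n (Function.update x j (!(x j))) \ cubeUnion n x) = cubeSet n j := by
  ext y
  simp only [Set.mem_union, Set.mem_diff, mem_cubeUnion]
  constructor
  · rintro (⟨⟨i, hxi, hyi⟩, hnot⟩ | ⟨⟨i, hxi, hyi⟩, hnot⟩)
    · by_cases hij : i = j
      · subst hij; exact hyi
      · exact absurd ⟨i, by rw [Function.update_of_ne hij]; exact hxi, hyi⟩ hnot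
    · by_cases hij : i = j
      · subst hij; exact hyi
      · exact absurd ⟨i, by rwa [Function.update_of_ne hij] at hxi, hyi⟩ hnot
  · intro hyA
    by_cases hxj : x j = true
    · left
      refine ⟨⟨j, hxj, hyA⟩, ?_⟩
      rintro ⟨i, hxi, hyi⟩
      have hij := cubeSet_uniq hyi hyA
      subst hij
      rw [Function.update_self, hxj] at hxi
      simp at hxi
    · right
      have hxj' : x j = false := by
        revert hxj; cases x j <;> simp
      refine ⟨⟨j, ?_, hyA⟩, ?_⟩
      · rw [Function.update_self, hxj']; rfl
      · rintro ⟨i, hxi, hyi⟩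
        have hij := cubeSet_uniq hyi hyA
        subst hij
        exact hxj hxi

lemma cubeUnion_symmdiff_diag {n : ℕ} (x : Fin n → Bool) :
    (cubeUnion n x \ cubeUnion n (fun i => !(x i))) ∪
      (cubeUnion n (fun i => !(x i)) \ cubeUnion n x) = ⋃ i, cubeSet n i := by
  ext y
  simp only [Set.mem_union, Set.mem_diff, mem_cubeUnion, Set.mem_iUnion]
  constructor
  · rintro (⟨⟨i, _, hyi⟩, _⟩ | ⟨⟨i, _, hyi⟩, _⟩) <;> exact ⟨i, hyi⟩
  · rintro ⟨i, hyi⟩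
    by_cases hxi : x i = true
    · left
      refine ⟨⟨i, hxi, hyi⟩, ?_⟩
      rintro ⟨k, hk, hyk⟩
      have hik := cubeSet_uniq hyk hyi
      subst hik
      rw [hxi] at hk; simp at hk
    · right
      have hxi' : x i = false := by revert hxi; cases x i <;> simp
      refine ⟨⟨i, ?_, hyi⟩, ?_⟩
      · rw [hxi']; rfl
      · rintro ⟨k, hk, hyk⟩
        have hik := cubeSet_uniq hyk hyi
        subst hik
        exact hxi hk

lemma volume_iUnion_cubeSet {n : ℕ} (hn : 0 < n) :
    (volume.restrict (Set.Ioo (0:ℝ) 1)) (⋃ i, cubeSet n i) = 1 := by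
  have hne : (n:ℝ) ≠ 0 := by positivity
  have hdisj : Pairwise (Function.onFun Disjoint (cubeSet n)) := by
    intro i j hij
    simp only [Function.onFun]
    rw [Set.disjoint_left]
    intro y hyi hyj
    exact hij (cubeSet_uniq hyi hyj)
  rw [measure_iUnion hdisj (fun i => measurableSet_cubeSet i), tsum_fintype]
  simp only [volume_cubeSet]
  rw [Finset.sum_const, Finset.card_univ, Fintype.card_fin, nsmul_eq_mul,
    ← ENNReal.ofReal_natCast, ← ENNReal.ofReal_mul (by positivity),
    mul_one_div, div_self hne, ENNReal.ofReal_one]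

section Aux

variable {H : Type*} [NormedAddCommGroup H] [InnerProductSpace ℝ H]

lemma aux_key_ineq
    (p : ℝ) (hp1 : 1 ≤ p)
    (α : ℝ) (hα : 0 < α)
    (T : Lp ℝ (ENNReal.ofReal p) (volume.restrict (Set.Ioo (0 : ℝ) 1)) → H)
    (A B : ℝ) (hA : 0 < A) (hB : 0 ≤ B)
    (hT_up : ∀ f g : Lp ℝ (ENNReal.ofReal p) (volume.restrict (Set.Ioo (0 : ℝ) 1)),
      ‖T f - T g‖ ≤ A * ‖f - g‖ + B)
    (C t : ℝ) (hC : 0 < C) (ht : 0 < t)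
    (hT_low : ∀ f g : Lp ℝ (ENNReal.ofReal p) (volume.restrict (Set.Ioo (0 : ℝ) 1)),
      t ≤ ‖f - g‖ → C * ‖f - g‖ ^ α ≤ ‖T f - T g‖)
    (n : ℕ) (hn : 0 < n) :
    C ^ 2 * t ^ (2 * α) * (n : ℝ) ^ (2 * α / p) ≤ (n : ℝ) * (A * t + B) ^ 2 := by
  have hp0 : 0 < p := lt_of_lt_of_le one_pos hp1
  have hn0 : (0:ℝ) ≤ (n:ℝ) := Nat.cast_nonneg n
  have hnpos : (0:ℝ) < (n:ℝ) := by exact_mod_cast hn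
  have hnne : (n:ℝ) ≠ 0 := ne_of_gt hnpos
  have hpe0 : ENNReal.ofReal p ≠ 0 := (ENNReal.ofReal_pos.mpr hp0).ne'
  have hpetop : ENNReal.ofReal p ≠ ⊤ := ENNReal.ofReal_ne_top
  have hpet : (ENNReal.ofReal p).toReal = p := ENNReal.toReal_ofReal hp0.le
  set s : ℝ := t * (n:ℝ) ^ (1/p) with hs
  have hrp_pos : (0:ℝ) < (n:ℝ) ^ (1/p) := Real.rpow_pos_of_pos hnpos _
  have hspos : 0 < s := mul_pos ht hrp_pos
  have hts : t ≤ s := by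
    have h1 : (1:ℝ) ≤ (n:ℝ) ^ (1/p) := by
      have := Real.rpow_le_rpow zero_le_one (by exact_mod_cast hn : (1:ℝ) ≤ n)
        (by positivity : (0:ℝ) ≤ 1/p)
      rwa [Real.one_rpow] at this
    exact le_mul_of_one_le_right ht.le h1
  -- the cube in Lp
  set F : (Fin n → Bool) → Lp ℝ (ENNReal.ofReal p) (volume.restrict (Set.Ioo (0:ℝ) 1)) :=
    fun x => indicatorConstLp (ENNReal.ofReal p) (measurableSet_cubeUnion x) (cubeUnion_ne_top x) s with hF
  -- edge norms
  have hedge : ∀ (x : Fin n → Bool) (j : Fin n),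
      ‖F x - F (Function.update x j (!(x j)))‖ = t := by
    intro x j
    rw [hF]
    rw [norm_indicatorConstLp_sub_indicatorConstLp _ _ _ _ s,
      norm_indicatorConstLp hpe0 hpetop, cubeUnion_symmdiff_edge x j,
      measureReal_def, volume_cubeSet j, hpet, ENNReal.toReal_ofReal (by positivity)]
    rw [Real.norm_eq_abs, abs_of_pos hspos, hs, mul_assoc,
      ← Real.mul_rpow hn0 (by positivity), mul_one_div, div_self hnne, Real.one_rpow, mul_one]
  -- diagonal norms
  have hdiag : ∀ (x : Fin n → Bool),
      ‖F x - F (fun i => !(x i))‖ = s := by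
    intro x
    rw [hF]
    rw [norm_indicatorConstLp_sub_indicatorConstLp _ _ _ _ s,
      norm_indicatorConstLp hpe0 hpetop, cubeUnion_symmdiff_diag x,
      measureReal_def, volume_iUnion_cubeSet hn, hpet, ENNReal.toReal_one, Real.one_rpow,
      Real.norm_eq_abs, abs_of_pos hspos, mul_one]
  -- Enflo inequality applied to T ∘ F
  have henflo := enflo_ineq n (fun x => T (F x))
  have hlow : ∀ x : Fin n → Bool,
      (C * s ^ α) ^ 2 ≤ ‖T (F x) - T (F (fun i => !(x i)))‖ ^ 2 := by
    intro x
    have h1 := hT_low (F x) (F (fun i => !(x i))) (by rw [hdiag x]; exact hts)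
    rw [hdiag x] at h1
    exact pow_le_pow_left₀ (by positivity) h1 2
  have hup : ∀ (x : Fin n → Bool) (j : Fin n),
      ‖T (F x) - T (F (Function.update x j (!(x j))))‖ ^ 2 ≤ (A * t + B) ^ 2 := by
    intro x j
    have h1 := hT_up (F x) (F (Function.update x j (!(x j))))
    rw [hedge x j] at h1
    exact pow_le_pow_left₀ (norm_nonneg _) h1 2
  set N : ℕ := Fintype.card (Fin n → Bool) with hN
  have hNpos : (0:ℝ) < (N:ℝ) := by
    have : 0 < N := Fintype.card_pos
    exact_mod_cast this
  have hchain : (N:ℝ) * (C * s ^ α) ^ 2 ≤ (N:ℝ) * ((n:ℝ) * (A * t + B) ^ 2) := by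
    calc (N:ℝ) * (C * s ^ α) ^ 2
        = ∑ _x : Fin n → Bool, (C * s ^ α) ^ 2 := by
          rw [Finset.sum_const, Finset.card_univ, nsmul_eq_mul, hN]
      _ ≤ ∑ x : Fin n → Bool, ‖T (F x) - T (F (fun i => !(x i)))‖ ^ 2 :=
          Finset.sum_le_sum (fun x _ => hlow x)
      _ ≤ ∑ x : Fin n → Bool, ∑ i : Fin n,
            ‖T (F x) - T (F (Function.update x i (!(x i))))‖ ^ 2 := henflo
      _ ≤ ∑ _x : Fin n → Bool, ∑ _i : Fin n, (A * t + B) ^ 2 :=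
          Finset.sum_le_sum (fun x _ => Finset.sum_le_sum (fun i _ => hup x i))
      _ = (N:ℝ) * ((n:ℝ) * (A * t + B) ^ 2) := by
          rw [Finset.sum_const, Finset.sum_const, Finset.card_univ, Finset.card_univ,
            Fintype.card_fin, nsmul_eq_mul, nsmul_eq_mul, hN]
  have hmain : (C * s ^ α) ^ 2 ≤ (n:ℝ) * (A * t + B) ^ 2 :=
    (mul_le_mul_iff_right₀ hNpos).mp hchain
  -- rewrite the left-hand side
  have hsq : ∀ (a b : ℝ), 0 ≤ a → (a ^ b) ^ 2 = a ^ (2 * b) := by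
    intro a b ha
    rw [← Real.rpow_natCast (a ^ b) 2, ← Real.rpow_mul ha]
    congr 1
    push_cast; ring
  have hLHS : (C * s ^ α) ^ 2 = C ^ 2 * t ^ (2 * α) * (n:ℝ) ^ (2 * α / p) := by
    have hs_eq : s ^ α = t ^ α * (n:ℝ) ^ (α / p) := by
      rw [hs, Real.mul_rpow ht.le (Real.rpow_nonneg hn0 _), ← Real.rpow_mul hn0]
      rw [show 1/p * α = α / p by ring]
    rw [hs_eq, mul_pow, mul_pow, hsq t α ht.le, hsq (n:ℝ) (α/p) hn0]
    rw [show 2 * (α / p) = 2 * α / p by ring]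
    ring
  rw [hLHS] at hmain
  exact hmain

end Aux

/-- For `1 ≤ p ≤ 2`, a real Hilbert space `H`, and `α > 0`: if
`T : L_p(0,1) → H` is large-scale Lipschitz (`‖T f - T g‖ ≤ A·‖f-g‖_p + B`) and
satisfies `‖T f - T g‖ ≥ C·‖f-g‖_p^α` whenever `‖f-g‖_p ≥ t` (for some `C, t > 0`),
then `α ≤ p/2`. In particular the Hilbert space compression exponent of `L_p(0,1)` is
at most `p/2`. Here `L_p(0,1)` is modelled as `Lp ℝ p` of Lebesgue measure restricted
to `(0,1)`. -/
theorem Lp01_compression_upper_bound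
    (p : ℝ) (hp1 : 1 ≤ p) (hp2 : p ≤ 2)
    (H : Type) [NormedAddCommGroup H] [InnerProductSpace ℝ H] [CompleteSpace H]
    (α : ℝ) (hα : 0 < α)
    (T : Lp ℝ (ENNReal.ofReal p) (volume.restrict (Set.Ioo (0 : ℝ) 1)) → H)
    (A B : ℝ) (hA : 0 < A) (hB : 0 ≤ B)
    (hT_up : ∀ f g : Lp ℝ (ENNReal.ofReal p) (volume.restrict (Set.Ioo (0 : ℝ) 1)),
      ‖T f - T g‖ ≤ A * ‖f - g‖ + B)
    (C t : ℝ) (hC : 0 < C) (ht : 0 < t)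
    (hT_low : ∀ f g : Lp ℝ (ENNReal.ofReal p) (volume.restrict (Set.Ioo (0 : ℝ) 1)),
      t ≤ ‖f - g‖ → C * ‖f - g‖ ^ α ≤ ‖T f - T g‖) :
    α ≤ p / 2 := by
  by_contra hcon
  push_neg at hcon
  have hp0 : 0 < p := lt_of_lt_of_le one_pos hp1
  set δ : ℝ := 2 * α / p - 1 with hδ
  have hδpos : 0 < δ := by
    rw [hδ]
    have h1 : 1 < 2 * α / p := by
      rw [lt_div_iff₀ hp0]; linarith
    linarith
  have ht2α : (0:ℝ) < t ^ (2 * α) := Real.rpow_pos_of_pos ht _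
  have hden : 0 < C ^ 2 * t ^ (2 * α) := by positivity
  set K : ℝ := (A * t + B) ^ 2 / (C ^ 2 * t ^ (2 * α)) with hK
  have hKbound : ∀ n : ℕ, 0 < n → ((n:ℝ)) ^ δ ≤ K := by
    intro n hn
    have hkey := aux_key_ineq p hp1 α hα T A B hA hB hT_up C t hC ht hT_low n hn
    have hnpos : (0:ℝ) < n := by exact_mod_cast hn
    have hsplit : (n:ℝ) ^ (2 * α / p) = (n:ℝ) ^ δ * (n:ℝ) := by
      conv_lhs => rw [show 2 * α / p = δ + 1 by rw [hδ]; ring]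
      rw [Real.rpow_add hnpos, Real.rpow_one]
    rw [hsplit] at hkey
    have h2 : C ^ 2 * t ^ (2 * α) * (n:ℝ) ^ δ ≤ (A * t + B) ^ 2 := by
      nlinarith [hkey, hnpos]
    rw [hK, le_div_iff₀ hden]
    nlinarith [h2]
  have hK1 : (1:ℝ) ≤ K := by
    have h1 := hKbound 1 one_pos
    rwa [Nat.cast_one, Real.one_rpow] at h1
  have hbase : (0:ℝ) < (K + 1) ^ (1/δ) := Real.rpow_pos_of_pos (by linarith) _
  obtain ⟨N, hN⟩ := exists_nat_gt ((K + 1) ^ (1/δ))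
  have hNpos : 0 < N := by
    have h1 : (0:ℝ) < (N:ℝ) := lt_trans hbase hN
    exact_mod_cast h1
  have hup : K + 1 ≤ (N:ℝ) ^ δ := by
    have h1 : ((K + 1) ^ (1/δ)) ^ δ ≤ (N:ℝ) ^ δ :=
      Real.rpow_le_rpow hbase.le hN.le hδpos.le
    rwa [← Real.rpow_mul (by linarith : (0:ℝ) ≤ K + 1),
      one_div_mul_cancel hδpos.ne', Real.rpow_one] at h1
  have hdown := hKbound N hNpos
  linarith
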